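/- Let k be a field and σ the k-algebra automorphism of R = k[x^{±1}, y^{±1}] determined by σ(x) = y, σ(y) = xy. If s ∈ R satisfies (x − 1) ∣ σ^j(s) for all j ≥ 0, then s = 0. -/

import Mathlib

/-- The Laurent polynomial ring `k[x^{±1}, y^{±1}]`, i.e. the group algebra of `ℤ²`. -/
abbrev Laurent2 (k : Type*) [Field k] := AddMonoidAlgebra k (ℤ × ℤ)

/-- The variable `x`. -/
noncomputable def Lx (k : Type*) [Field k] : Laurent2 k := AddMonoidAlgebra.single (1, 0) 1

/-- The automorphism `(a,b) ↦ (b, a+b)` of `ℤ²` (the matrix `[[0,1],[1,1]]`),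
corresponding to the substitution `x ↦ y`, `y ↦ xy`. -/
def fibAut : (ℤ × ℤ) ≃+ (ℤ × ℤ) where
  toFun v := (v.2, v.1 + v.2)
  invFun w := (w.2 - w.1, w.1)
  left_inv := by intro v; simp
  right_inv := by intro w; simp
  map_add' := by intro v w; simp [Prod.ext_iff]; ring

/-- The `k`-algebra automorphism `σ` of `k[x^{±1}, y^{±1}]` with `σ(x) = y`, `σ(y) = xy`. -/
noncomputable def sigmaSub (k : Type*) [Field k] : Laurent2 k ≃ₐ[k] Laurent2 k :=
  AddMonoidAlgebra.domCongr k k fibAut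

/-- Second coordinate of the `j`-th iterate. -/
def aSeq (j : ℕ) (d : ℤ × ℤ) : ℤ := ((⇑fibAut)^[j] d).2

lemma fibAut_iter_succ (j : ℕ) (d : ℤ × ℤ) :
    (⇑fibAut)^[j + 1] d = (aSeq j d, ((⇑fibAut)^[j] d).1 + aSeq j d) := by
  rw [Function.iterate_succ_apply']
  rfl

lemma aSeq_succ (j : ℕ) (d : ℤ × ℤ) :
    aSeq (j + 1) d = ((⇑fibAut)^[j] d).1 + aSeq j d := by
  show ((⇑fibAut)^[j+1] d).2 = _
  rw [fibAut_iter_succ]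

lemma fst_iter_succ (j : ℕ) (d : ℤ × ℤ) : ((⇑fibAut)^[j + 1] d).1 = aSeq j d := by
  rw [fibAut_iter_succ]

lemma aSeq_rec (j : ℕ) (d : ℤ × ℤ) : aSeq (j + 2) d = aSeq j d + aSeq (j + 1) d := by
  rw [show j + 2 = (j + 1) + 1 from rfl, aSeq_succ (j + 1), fst_iter_succ, add_comm]

lemma aSeq_zero_zero {j : ℕ} {d : ℤ × ℤ} (h0 : aSeq j d = 0) (h1 : aSeq (j + 1) d = 0) :
    d = 0 := by
  have hfix : (⇑fibAut)^[j+1] (0 : ℤ × ℤ) = 0 := by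
    induction (j+1) with
    | zero => rfl
    | succ n ih => rw [Function.iterate_succ_apply', ih, map_zero]
  have hfst : ((⇑fibAut)^[j] d).1 = 0 := by
    rw [aSeq_succ, h0, add_zero] at h1; exact h1
  have heq : (⇑fibAut)^[j+1] d = (⇑fibAut)^[j+1] (0 : ℤ × ℤ) := by
    rw [hfix, fibAut_iter_succ, h0, hfst]; rfl
  exact (fibAut.injective.iterate (j+1)) heq

lemma fib_mul_aux (c : ℤ) (u : ℕ → ℤ) (h0 : u 0 = 0) (h1 : u 1 = c)
    (hrec : ∀ n, u (n + 2) = u n + u (n + 1)) : ∀ n, u n = Nat.fib n * c := by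
  intro n
  induction n using Nat.strong_induction_on with
  | _ n ih =>
    match n with
    | 0 => simpa using h0
    | 1 => simpa using h1
    | Nat.succ (Nat.succ m) =>
      rw [hrec, ih m (by omega), ih (m+1) (by omega), Nat.fib_add_two]
      push_cast; ring

lemma aSeq_eventually_ne {d : ℤ × ℤ} (hd : d ≠ 0) :
    ∀ᶠ j in Filter.atTop, aSeq j d ≠ 0 := by
  by_cases hall : ∀ j, aSeq j d ≠ 0
  · exact Filter.Eventually.of_forall hall
  · push_neg at hall
    obtain ⟨j0, hj0⟩ := hall
    have hc : aSeq (j0 + 1) d ≠ 0 := fun hc => hd (aSeq_zero_zero hj0 hc)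
    have hfib : ∀ n, aSeq (j0 + n) d = Nat.fib n * aSeq (j0 + 1) d := by
      apply fib_mul_aux (aSeq (j0 + 1) d) (fun n => aSeq (j0 + n) d) (by simpa using hj0) rfl
      intro n
      exact aSeq_rec (j0 + n) d
    filter_upwards [Filter.eventually_ge_atTop (j0 + 1)] with j hj
    obtain ⟨m, rfl⟩ := Nat.exists_eq_add_of_le (le_of_lt (Nat.lt_of_lt_of_le (Nat.lt_succ_self j0) hj))
    rw [hfib]
    have hm : 0 < m := by omega
    exact mul_ne_zero (by exact_mod_cast (Nat.fib_pos.mpr hm).ne') hc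

lemma fibAut_iter_sub (j : ℕ) (v w : ℤ × ℤ) :
    (⇑fibAut)^[j] (v - w) = (⇑fibAut)^[j] v - (⇑fibAut)^[j] w := by
  induction j with
  | zero => rfl
  | succ n ih => rw [Function.iterate_succ_apply', Function.iterate_succ_apply',
      Function.iterate_succ_apply', ih, map_sub]

lemma aSeq_sub (j : ℕ) (v w : ℤ × ℤ) : aSeq j (v - w) = aSeq j v - aSeq j w := by
  unfold aSeq
  rw [fibAut_iter_sub]
  rfl

lemma sigmaSub_apply (k : Type*) [Field k] (t : Laurent2 k) :
    (sigmaSub k t).coeff = Finsupp.mapDomain (⇑fibAut) t.coeff :=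
  rfl

lemma sigmaSub_iter (k : Type*) [Field k] (t : Laurent2 k) (j : ℕ) :
    ((⇑(sigmaSub k))^[j] t).coeff = Finsupp.mapDomain ((⇑fibAut)^[j]) t.coeff := by
  induction j with
  | zero => simp [Finsupp.mapDomain_id]
  | succ n ih =>
    rw [Function.iterate_succ_apply', sigmaSub_apply, ih, Function.iterate_succ']
    exact (Finsupp.mapDomain_comp).symm

/-- Evaluation at `x = 1`: the ring hom induced by the projection `(a,b) ↦ b`. -/
noncomputable def evalX (k : Type*) [Field k] : Laurent2 k →+* AddMonoidAlgebra k ℤ :=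
  AddMonoidAlgebra.mapDomainRingHom k (AddMonoidHom.snd ℤ ℤ)

lemma evalX_sub_one (k : Type*) [Field k] : evalX k (Lx k - 1) = 0 := by
  rw [map_sub, map_one]
  have : evalX k (Lx k) = 1 := by
    have h2 : evalX k (Lx k)
        = AddMonoidAlgebra.ofCoeff (Finsupp.mapDomain (AddMonoidHom.snd ℤ ℤ) (Finsupp.single ((1:ℤ),(0:ℤ)) (1:k))) := rfl
    rw [h2, Finsupp.mapDomain_single]
    exact (AddMonoidAlgebra.one_def).symm
  rw [this, sub_self]

/-- If `s ∈ k[x^{±1}, y^{±1}]` is such that `(x − 1) ∣ σ^j(s)` for all `j ≥ 0`,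
where `σ(x) = y`, `σ(y) = xy`, then `s = 0`. -/
theorem stmt10 (k : Type*) [Field k] (s : Laurent2 k)
    (h : ∀ j : ℕ, (Lx k - 1) ∣ (⇑(sigmaSub k))^[j] s) : s = 0 := by
  by_contra hs
  -- find j such that aSeq j is injective on the support of s
  have hev : ∀ᶠ j in Filter.atTop,
      ∀ p ∈ s.coeff.support ×ˢ s.coeff.support, p.1 ≠ p.2 → aSeq j (p.1 - p.2) ≠ 0 := by
    rw [Filter.eventually_all_finset]
    intro p _
    by_cases hpe : p.1 = p.2
    · exact Filter.Eventually.of_forall fun j hne => absurd hpe hne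
    · exact (aSeq_eventually_ne (sub_ne_zero.mpr hpe)).mono fun j hj _ => hj
  obtain ⟨j, hj⟩ := hev.exists
  have hinj : Set.InjOn (aSeq j) (s.coeff.support : Set (ℤ × ℤ)) := by
    intro v hv w hw he
    by_contra hne
    have hmem : (v, w) ∈ s.coeff.support ×ˢ s.coeff.support := Finset.mem_product.mpr ⟨hv, hw⟩
    exact hj (v, w) hmem hne (by rw [aSeq_sub, he, sub_self])
  -- evaluation of σ^j s at x = 1 is zero
  obtain ⟨t, ht⟩ := h j
  have hE0 : evalX k ((⇑(sigmaSub k))^[j] s) = 0 := by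
    rw [ht, map_mul, evalX_sub_one, zero_mul]
  have hE : Finsupp.mapDomain (aSeq j) s.coeff = 0 := by
    have h1 : (evalX k ((⇑(sigmaSub k))^[j] s)).coeff
        = Finsupp.mapDomain (Prod.snd ∘ (⇑fibAut)^[j]) s.coeff := by
      show Finsupp.mapDomain _ ((⇑(sigmaSub k))^[j] s).coeff = _
      rw [sigmaSub_iter]
      rw [← Finsupp.mapDomain_comp]
      rfl
    have hE0' := congrArg AddMonoidAlgebra.coeff hE0
    rw [h1] at hE0'
    exact hE0'
  obtain ⟨a, ha⟩ := Finsupp.support_nonempty_iff.mpr (fun h0 => hs (AddMonoidAlgebra.coeff_injective h0))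
  have := Finsupp.mapDomain_apply' (s.coeff.support : Set (ℤ × ℤ)) s.coeff (le_refl _) hinj ha
  rw [hE] at this
  exact (Finsupp.mem_support_iff.mp ha) this.symm
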